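/- For every connected graph G, γ_coe(G ∘ K_1) = |V(G)| + |E_V(G)|, where E_V(G) denotes the set of even-degree vertices of G. -/
import Mathlib


open SimpleGraph

/-- `D` is a dominating set of `G`. -/
def IsDomSet {V : Type*} (G : SimpleGraph V) (D : Set V) : Prop :=
  ∀ v ∉ D, ∃ u ∈ D, G.Adj u v

/-- `D` is a co-even dominating set of `G`: a dominating set such that
every vertex outside `D` has even degree. -/
def IsCoEvenDomSet {V : Type*} (G : SimpleGraph V) (D : Set V) : Prop :=
  IsDomSet G D ∧ ∀ v ∉ D, Even (G.neighborSet v).ncard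

/-- The domination number. -/
noncomputable def gammaD {V : Type*} (G : SimpleGraph V) : ℕ :=
  sInf {n | ∃ D : Set V, IsDomSet G D ∧ D.ncard = n}

/-- The co-even domination number. -/
noncomputable def gammaCoe {V : Type*} (G : SimpleGraph V) : ℕ :=
  sInf {n | ∃ D : Set V, IsCoEvenDomSet G D ∧ D.ncard = n}

/-- The set of vertices of odd degree. -/
def oddVerts {V : Type*} (G : SimpleGraph V) : Set V :=
  {v | Odd (G.neighborSet v).ncard}

/-- The set of vertices of even degree. -/
def evenVerts {V : Type*} (G : SimpleGraph V) : Set V :=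
  {v | Even (G.neighborSet v).ncard}

/-- The join `G + H` of two graphs. -/
def joinG {V W : Type*} (G : SimpleGraph V) (H : SimpleGraph W) : SimpleGraph (V ⊕ W) :=
  SimpleGraph.fromRel (fun a b =>
    match a, b with
    | Sum.inl u, Sum.inl v => G.Adj u v
    | Sum.inr u, Sum.inr v => H.Adj u v
    | _, _ => True)

/-- The corona `G ∘ H`: one copy of `G` and `|V(G)|` copies of `H`,
joining the `i`-th vertex of `G` to every vertex of the `i`-th copy of `H`. -/
def corona {V W : Type*} (G : SimpleGraph V) (H : SimpleGraph W) : SimpleGraph (V ⊕ V × W) :=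
  SimpleGraph.fromRel (fun a b =>
    match a, b with
    | Sum.inl u, Sum.inl v => G.Adj u v
    | Sum.inr u, Sum.inr v => u.1 = v.1 ∧ H.Adj u.2 v.2
    | Sum.inl u, Sum.inr v => u = v.1
    | Sum.inr _, Sum.inl _ => False)

/-- The neighbourhood corona `G ⋆ H`: one copy of `G` and `|V(G)|` copies of `H`,
joining every neighbour of the `i`-th vertex of `G` to every vertex of the
`i`-th copy of `H`. -/
def ncorona {V W : Type*} (G : SimpleGraph V) (H : SimpleGraph W) : SimpleGraph (V ⊕ V × W) :=
  SimpleGraph.fromRel (fun a b =>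
    match a, b with
    | Sum.inl u, Sum.inl v => G.Adj u v
    | Sum.inr u, Sum.inr v => u.1 = v.1 ∧ H.Adj u.2 v.2
    | Sum.inl u, Sum.inr v => G.Adj u v.1
    | Sum.inr _, Sum.inl _ => False)

/-- The Hajós sum `G₁(x₁y₁) +_H G₂(x₂y₂)`: delete edges `x₁y₁` and `x₂y₂`,
identify `x₁` with `x₂` (represented here by `Sum.inr x₂`), and add the edge `y₁y₂`. -/
def hajos {V₁ V₂ : Type*} (G₁ : SimpleGraph V₁) (G₂ : SimpleGraph V₂)
    (x₁ y₁ : V₁) (x₂ y₂ : V₂) : SimpleGraph ({v : V₁ // v ≠ x₁} ⊕ V₂) :=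
  SimpleGraph.fromRel (fun a b =>
    match a, b with
    | Sum.inl u, Sum.inl v => G₁.Adj u.1 v.1
    | Sum.inr u, Sum.inr v => G₂.Adj u v ∧ ¬(u = x₂ ∧ v = y₂) ∧ ¬(u = y₂ ∧ v = x₂)
    | Sum.inl u, Sum.inr v => (v = x₂ ∧ G₁.Adj x₁ u.1 ∧ u.1 ≠ y₁) ∨ (u.1 = y₁ ∧ v = y₂)
    | Sum.inr _, Sum.inl _ => False)

section Aux

variable {V : Type*} [Fintype V] (G : SimpleGraph V)

lemma nbr_inr (p : V × Fin 1) :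
    (corona G (⊤ : SimpleGraph (Fin 1))).neighborSet (Sum.inr p) = {Sum.inl p.1} := by
  ext b
  cases b with
  | inl u =>
    simp [corona, SimpleGraph.mem_neighborSet, eq_comm]
  | inr q =>
    simp [corona, SimpleGraph.mem_neighborSet, Subsingleton.elim p.2 q.2]

lemma nbr_inl (v : V) :
    (corona G (⊤ : SimpleGraph (Fin 1))).neighborSet (Sum.inl v) =
      Sum.inl '' G.neighborSet v ∪ {Sum.inr (v, (0 : Fin 1))} := by
  ext b
  cases b with
  | inl u =>
    simp only [corona, SimpleGraph.mem_neighborSet, SimpleGraph.fromRel_adj, Set.mem_union,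
      Set.mem_image, Set.mem_singleton_iff]
    constructor
    · rintro ⟨hne, h | h⟩
      · exact Or.inl ⟨u, h, rfl⟩
      · exact Or.inl ⟨u, h.symm, rfl⟩
    · rintro (⟨w, hw, hwe⟩ | h)
      · cases hwe
        exact ⟨by simpa using hw.ne, Or.inl hw⟩
      · simp at h
  | inr q =>
    simp only [corona, SimpleGraph.mem_neighborSet, SimpleGraph.fromRel_adj, Set.mem_union,
      Set.mem_image, Set.mem_singleton_iff]
    constructor
    · rintro ⟨hne, h | h⟩
      · exact Or.inr (by cases h; exact congrArg _ (Prod.ext rfl (Subsingleton.elim _ _)))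
      · simp at h
    · rintro (⟨w, hw, hwe⟩ | h)
      · simp at hwe
      · cases h
        exact ⟨by simp, Or.inl rfl⟩

lemma card_nbr_inl (v : V) :
    ((corona G (⊤ : SimpleGraph (Fin 1))).neighborSet (Sum.inl v)).ncard =
      (G.neighborSet v).ncard + 1 := by
  rw [nbr_inl, Set.ncard_union_eq (by simp) ((G.neighborSet v).toFinite.image _)
      (Set.finite_singleton _),
    Set.ncard_image_of_injective _ Sum.inl_injective, Set.ncard_singleton]

lemma card_nbr_inr (p : V × Fin 1) :
    ((corona G (⊤ : SimpleGraph (Fin 1))).neighborSet (Sum.inr p)).ncard = 1 := by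
  rw [nbr_inr, Set.ncard_singleton]

/-- the canonical minimum co-even dominating set of the corona -/
def D0 : Set (V ⊕ V × Fin 1) :=
  Sum.inl '' evenVerts G ∪ Sum.inr '' (Set.univ : Set (V × Fin 1))

lemma D0_card : (D0 G).ncard = Fintype.card V + (evenVerts G).ncard := by
  rw [D0, Set.ncard_union_eq (by simp [Set.disjoint_left])
      ((evenVerts G).toFinite.image _) (Set.toFinite _),
    Set.ncard_image_of_injective _ Sum.inl_injective,
    Set.ncard_image_of_injective _ Sum.inr_injective, Set.ncard_univ]
  simp [Nat.card_eq_fintype_card, Nat.add_comm]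

lemma D0_isCoEven : IsCoEvenDomSet (corona G (⊤ : SimpleGraph (Fin 1))) (D0 G) := by
  constructor
  · rintro (v | p) hv
    · refine ⟨Sum.inr (v, 0), Or.inr ⟨(v, 0), trivial, rfl⟩, ?_⟩
      have : Sum.inl v ∈ (corona G (⊤ : SimpleGraph (Fin 1))).neighborSet
          (Sum.inr (v, (0 : Fin 1))) := by rw [nbr_inr]; rfl
      exact this
    · exact absurd (Or.inr ⟨p, trivial, rfl⟩) hv
  · rintro (v | p) hv
    · have hv' : v ∉ evenVerts G := fun h => hv (Or.inl ⟨v, h, rfl⟩)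
      rw [card_nbr_inl, Nat.even_add_one]
      exact fun h => hv' h
    · exact absurd (Or.inr ⟨p, trivial, rfl⟩) hv

lemma D0_subset {D : Set (V ⊕ V × Fin 1)}
    (hD : IsCoEvenDomSet (corona G (⊤ : SimpleGraph (Fin 1))) D) : D0 G ⊆ D := by
  rintro b (⟨v, hv, rfl⟩ | ⟨p, _, rfl⟩)
  · by_contra hvD
    have := hD.2 _ hvD
    rw [card_nbr_inl, Nat.even_add_one] at this
    exact this hv
  · by_contra hpD
    have := hD.2 _ hpD
    rw [card_nbr_inr] at this
    simp at this

end Aux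

theorem stmt12 {V : Type*} [Fintype V] (G : SimpleGraph V) (hG : G.Connected) :
    gammaCoe (corona G (⊤ : SimpleGraph (Fin 1))) =
      Fintype.card V + (evenVerts G).ncard := by
  have hmem : Fintype.card V + (evenVerts G).ncard ∈
      {n | ∃ D : Set (V ⊕ V × Fin 1),
        IsCoEvenDomSet (corona G (⊤ : SimpleGraph (Fin 1))) D ∧ D.ncard = n} :=
    ⟨D0 G, D0_isCoEven G, D0_card G⟩
  refine le_antisymm (Nat.sInf_le hmem) (le_csInf ⟨_, hmem⟩ ?_)
  rintro n ⟨D, hD, rfl⟩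
  calc Fintype.card V + (evenVerts G).ncard = (D0 G).ncard := (D0_card G).symm
    _ ≤ D.ncard := Set.ncard_le_ncard (D0_subset G hD) D.toFinite
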